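/- Let φ: ℝ → ℝ be a convex function with ∫_ℝ e^{-φ(s)} ds < ∞, and define χ(u) = -log ∫_{s < -u} e^{-φ(s)} ds. Then χ is convex on ℝ. -/

import Mathlib

open MeasureTheory Real Set

/-- Prékopa's theorem, one-dimensional marginal form: if `φ : ℝ → ℝ` is convex with
`∫ e^{-φ} < ∞`, then `χ(u) = -log ∫_{s < -u} e^{-φ(s)} ds` is convex. -/
theorem stmt1 (φ : ℝ → ℝ) (hφ : ConvexOn ℝ Set.univ φ)
    (hint : Integrable (fun s => Real.exp (-φ s))) :
    ConvexOn ℝ Set.univ (fun u => -Real.log (∫ s in Set.Iio (-u), Real.exp (-φ s))) := by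
  set f : ℝ → ℝ := fun s => Real.exp (-φ s) with hfdef
  have hφc : Continuous φ := by
    exact continuousOn_univ.1 (hφ.continuousOn isOpen_univ)
  have hfc : Continuous f := Real.continuous_exp.comp hφc.neg
  have hfpos : ∀ s, 0 < f s := fun s => Real.exp_pos _
  set H : ℝ → ℝ := fun x => ∫ s in Iic x, f s with hHdef
  -- positivity of H
  have hHpos : ∀ x, 0 < H x := by
    intro x
    rw [hHdef]
    rw [setIntegral_pos_iff_support_of_nonneg_ae
      (Filter.Eventually.of_forall fun s => (hfpos s).le) hint.integrableOn]
    have hsupp : Function.support f = univ := by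
      ext s; simp [Function.mem_support, (hfpos s).ne']
    rw [hsupp, univ_inter]
    simp [Real.volume_Iic]
  -- H x = H 0 + ∫ 0..x
  have hHeq : ∀ x : ℝ, H x = H 0 + ∫ s in (0:ℝ)..x, f s := by
    intro x
    have := intervalIntegral.integral_Iic_sub_Iic (μ := volume) (f := f)
      hint.integrableOn hint.integrableOn (a := 0) (b := x)
    linarith [this]
  -- derivative of H
  have hHderiv : ∀ x, HasDerivAt H (f x) x := by
    intro x
    have h1 : HasDerivAt (fun y => ∫ s in (0:ℝ)..y, f s) (f x) x :=
      intervalIntegral.integral_hasDerivAt_right (hfc.intervalIntegrable 0 x)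
        (hfc.stronglyMeasurableAtFilter _ _) hfc.continuousAt
    have h2 := h1.const_add (H 0)
    refine h2.congr_of_eventuallyEq ?_
    filter_upwards with y using (hHeq y)
  -- translation of H
  have htrans : ∀ x c : ℝ, (∫ s in Iic x, f (s + c)) = H (x + c) := by
    intro x c
    have hr : H (x + c) = ∫ s, (Iic (x + c)).indicator f s := by
      simp only [hHdef]
      exact (integral_indicator measurableSet_Iic).symm
    rw [← integral_indicator measurableSet_Iic, hr]
    have : ∀ s : ℝ, (Iic x).indicator (fun s => f (s + c)) s
        = (Iic (x + c)).indicator f (s + c) := by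
      intro s
      by_cases h : s ≤ x
      · rw [indicator_of_mem (by simpa using h),
          indicator_of_mem (by simp only [mem_Iic, add_le_add_iff_right]; exact h)]
      · rw [indicator_of_notMem (by simpa using h),
          indicator_of_notMem (by simp only [mem_Iic, add_le_add_iff_right]; exact h)]
    rw [funext this, integral_add_right_eq_self (fun s => (Iic (x + c)).indicator f s) c]
  -- key inequality: reversed hazard rate
  have hkey : ∀ x y : ℝ, x ≤ y → f y * H x ≤ f x * H y := by
    intro x y hxy
    rcases eq_or_lt_of_le hxy with rfl | hlt
    · rfl
    have hpt : ∀ s ∈ Iic x, f y * f s ≤ f x * f (s + (y - x)) := by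
      intro s hs
      simp only [mem_Iic] at hs
      have hsy : s < y := lt_of_le_of_lt hs hlt
      set t : ℝ := (y - x) / (y - s) with htdef
      have hys : 0 < y - s := by linarith
      have ht0 : 0 ≤ t := div_nonneg (by linarith) hys.le
      have ht1 : t ≤ 1 := (div_le_one hys).2 (by linarith)
      have hmul : t * (y - s) = y - x := div_mul_cancel₀ _ (sub_ne_zero.2 hsy.ne')
      have hx_comb : t * s + (1 - t) * y = x := by linear_combination -hmul
      have hz_comb : (1 - t) * s + t * y = s + (y - x) := by linear_combination hmul
      have h1 := hφ.2 (mem_univ s) (mem_univ y) ht0 (by linarith : (0:ℝ) ≤ 1 - t) (by ring)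
      simp only [smul_eq_mul] at h1
      rw [hx_comb] at h1
      have h2 := hφ.2 (mem_univ s) (mem_univ y) (by linarith : (0:ℝ) ≤ 1 - t) ht0 (by ring)
      simp only [smul_eq_mul] at h2
      rw [hz_comb] at h2
      have hsum : φ x + φ (s + (y - x)) ≤ φ s + φ y := by nlinarith
      calc f y * f s = Real.exp (-(φ s + φ y)) := by
            rw [hfdef]; simp only [← Real.exp_add]; ring_nf
        _ ≤ Real.exp (-(φ x + φ (s + (y - x)))) := by
            apply Real.exp_le_exp.2; linarith
        _ = f x * f (s + (y - x)) := by
            rw [hfdef]; simp only [← Real.exp_add]; ring_nf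
    have hInt1 : IntegrableOn (fun s => f y * f s) (Iic x) := by
      exact (hint.const_mul (f y)).integrableOn
    have hInt2 : IntegrableOn (fun s => f x * f (s + (y - x))) (Iic x) := by
      exact ((hint.comp_add_right (y - x)).const_mul (f x)).integrableOn
    have hmono := setIntegral_mono_on hInt1 hInt2 measurableSet_Iic hpt
    rw [integral_const_mul, integral_const_mul, htrans x (y - x)] at hmono
    have hxy' : x + (y - x) = y := by ring
    rw [hxy'] at hmono
    simpa [hHdef] using hmono
  -- log H is concave
  set L : ℝ → ℝ := fun x => Real.log (H x) with hLdef
  have hLderiv : ∀ x, HasDerivAt L (f x / H x) x := by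
    intro x
    exact (hHderiv x).log (hHpos x).ne'
  have hLdiff : DifferentiableOn ℝ L (interior univ) :=
    fun x _ => (hLderiv x).differentiableAt.differentiableWithinAt
  have hLderiv' : ∀ x, deriv L x = f x / H x := fun x => (hLderiv x).deriv
  have hanti : AntitoneOn (deriv L) (interior univ) := by
    intro x _ y _ hxy
    rw [hLderiv' x, hLderiv' y]
    rw [div_le_div_iff₀ (hHpos y) (hHpos x)]
    exact hkey x y hxy
  have hconc : ConcaveOn ℝ univ L :=
    AntitoneOn.concaveOn_of_deriv convex_univ
      (fun x _ => (hLderiv x).differentiableAt.continuousAt.continuousWithinAt)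
      hLdiff hanti
  -- conclude
  have hIioIic : ∀ x : ℝ, (∫ s in Iio x, f s) = H x := by
    intro x
    exact setIntegral_congr_set Iio_ae_eq_Iic
  refine ⟨convex_univ, ?_⟩
  intro u _ v _ a b ha hb hab
  simp only [smul_eq_mul, hIioIic]
  have hc := hconc.2 (mem_univ (-u)) (mem_univ (-v)) ha hb hab
  simp only [smul_eq_mul] at hc
  have hneg : -(a * u + b * v) = a * (-u) + b * (-v) := by ring
  rw [hneg]
  linarith
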